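/- Let w : (a, b) → [0, ∞) be integrable with ∫_a^b w > 0, let θ > -1, r = θ + 2, and suppose there exist λ_I ≥ 0 and C_H > 1 with r < C_H/(C_H - 1) such that for all λ ≥ λ_I, ∫_{{x ∈ (a,b) : w(x) > λ}} w(x) dx ≤ C_H λ |{x ∈ (a,b) : w(x) > λ}|. Assume furthermore that w is bounded (so all integrals below are finite). Then ∫_a^b w(x)^r dx ≤ C λ_I^{r-1} ∫_a^b w(x) dx, where C depends only on C_H and r. -/

import Mathlib

open MeasureTheory Set ENNReal

/-- A one-sided level-set (good-λ) estimate above a threshold `λ_I` implies a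
reverse Hölder type bound `∫ w^r ≤ C λ_I^{r-1} ∫ w`, provided
`r < C_H/(C_H - 1)`. -/
theorem good_lambda_implies_reverse_holder (CH r : ℝ) (hCH : 1 < CH)
    (hr1 : 1 < r) (hrC : r < CH / (CH - 1)) :
    ∃ C : ℝ, 0 ≤ C ∧ ∀ (a b : ℝ), a < b → ∀ (w : ℝ → ℝ), (∀ x, 0 ≤ w x) →
      IntegrableOn w (Set.Ioo a b) volume →
      (0 < ∫ x in Set.Ioo a b, w x) →
      (∃ M : ℝ, ∀ x, w x ≤ M) →
      ∀ lamI : ℝ, 0 ≤ lamI →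
      (∀ lam : ℝ, lamI ≤ lam →
        ∫ x in {x ∈ Set.Ioo a b | lam < w x}, w x ≤
          CH * lam * (volume {x ∈ Set.Ioo a b | lam < w x}).toReal) →
      ∫ x in Set.Ioo a b, w x ^ r ≤ C * lamI ^ (r - 1) * ∫ x in Set.Ioo a b, w x := by
  have hr0 : (0:ℝ) < r := by linarith
  have hCH0 : (0:ℝ) < CH := by linarith
  have hden : (0:ℝ) < r - CH * (r - 1) := by
    have h1 : (0:ℝ) < CH - 1 := by linarith
    have h2 : r * (CH - 1) < CH := (lt_div_iff₀ h1).mp hrC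
    nlinarith
  refine ⟨r / (r - CH * (r - 1)), by positivity, ?_⟩
  intro a b hab w hw0 hwint hwpos hwbdd lamI hlamI hgood
  obtain ⟨M, hM⟩ := hwbdd
  have hM0 : 0 ≤ M := le_trans (hw0 a) (hM a)
  set μ : Measure ℝ := volume.restrict (Set.Ioo a b) with hμ
  haveI : IsFiniteMeasure μ := by
    constructor
    rw [hμ, Measure.restrict_apply_univ]
    exact measure_Ioo_lt_top
  -- measurable bounded representative
  have hwae : AEMeasurable w μ := hwint.aemeasurable
  set g : ℝ → ℝ := fun x => max 0 (min (hwae.mk w x) M) with hgdef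
  have hgmeas : Measurable g :=
    measurable_const.max ((hwae.measurable_mk).min measurable_const)
  have hg0 : ∀ x, 0 ≤ g x := fun x => le_max_left _ _
  have hgM : ∀ x, g x ≤ M := fun x => max_le hM0 (min_le_right _ _)
  have hg_eq : w =ᵐ[μ] g := by
    filter_upwards [hwae.ae_eq_mk] with x hx
    rw [hgdef]; simp only [← hx]
    rw [min_eq_left (hM x), max_eq_right (hw0 x)]
  set ν : Measure ℝ := μ.withDensity (fun x => ENNReal.ofReal (g x)) with hν
  set T : ℝ → Set ℝ := fun t => {x : ℝ | t < g x} with hT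
  have hTmeas : ∀ t, MeasurableSet (T t) := fun t => measurableSet_lt measurable_const hgmeas
  -- ν of T t
  have hνT : ∀ t, ν (T t) = ∫⁻ x in T t, ENNReal.ofReal (g x) ∂μ := fun t =>
    withDensity_apply _ (hTmeas t)
  have hgint : Integrable g μ := by
    refine ⟨hgmeas.aestronglyMeasurable, ?_⟩
    apply HasFiniteIntegral.of_bounded (C := M)
    filter_upwards with x
    rw [Real.norm_eq_abs, abs_of_nonneg (hg0 x)]; exact hgM x
  have hνuniv : ν Set.univ = ENNReal.ofReal (∫ x in Set.Ioo a b, w x) := by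
    rw [hν, withDensity_apply _ MeasurableSet.univ, Measure.restrict_univ]
    rw [show (∫ x in Set.Ioo a b, w x) = ∫ x, g x ∂μ from integral_congr_ae hg_eq]
    rw [ofReal_integral_eq_lintegral_ofReal hgint (Filter.Eventually.of_forall hg0)]
  have hνtop : ν Set.univ ≠ ∞ := by rw [hνuniv]; exact ENNReal.ofReal_ne_top
  -- transfer of hypothesis sets
  have hset : ∀ t : ℝ, ({x ∈ Set.Ioo a b | t < w x} : Set ℝ) =ᵐ[volume] ((T t ∩ Set.Ioo a b : Set ℝ)) := by
    intro t
    have hnull : volume ({x | w x ≠ g x} ∩ Set.Ioo a b) = 0 := by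
      have := hg_eq
      rw [Filter.EventuallyEq, ae_iff] at this
      rw [hμ, Measure.restrict_apply' measurableSet_Ioo] at this
      exact this
    rw [Filter.eventuallyEq_set, ae_iff]
    refine measure_mono_null ?_ hnull
    intro x hx
    simp only [Set.mem_setOf_eq] at hx
    by_contra hc
    apply hx
    simp only [Set.mem_inter_iff, Set.mem_setOf_eq, not_and_or, not_not, not_ne_iff] at hc
    rcases hc with h | h
    · constructor
      · rintro ⟨h1, h2⟩; exact ⟨show t < g x from h ▸ h2, h1⟩
      · rintro ⟨h1, h2⟩; exact ⟨h2, show t < w x from h.symm ▸ (h1 : t < g x)⟩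
    · constructor
      · rintro ⟨h1, _⟩; exact absurd h1 h
      · rintro ⟨_, h2⟩; exact absurd h2 h
  -- key measure transfer
  have hμT : ∀ t : ℝ, volume ({x ∈ Set.Ioo a b | t < w x} : Set ℝ) = μ (T t) := by
    intro t
    rw [measure_congr (hset t), hμ, Measure.restrict_apply (hTmeas t)]
  have hintT : ∀ t : ℝ, (∫ x in {x ∈ Set.Ioo a b | t < w x}, w x) = (ν (T t)).toReal := by
    intro t
    rw [setIntegral_congr_set (hset t)]
    have h1 : volume.restrict (T t ∩ Set.Ioo a b) = μ.restrict (T t) := by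
      rw [hμ, Measure.restrict_restrict (hTmeas t)]
    rw [show (∫ x in T t ∩ Set.Ioo a b, w x) = ∫ x in T t ∩ Set.Ioo a b, g x from ?_]
    · rw [show (∫ x in T t ∩ Set.Ioo a b, g x) = ∫ x, g x ∂(μ.restrict (T t)) from by rw [h1]]
      rw [integral_eq_lintegral_of_nonneg_ae (Filter.Eventually.of_forall hg0)
        hgmeas.aestronglyMeasurable, ← hνT t]
    · apply integral_congr_ae
      rw [h1]
      exact ae_restrict_of_ae hg_eq
  have hkey : ∀ t : ℝ, lamI ≤ t → ν (T t) ≤ ENNReal.ofReal (CH * t) * μ (T t) := by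
    intro t ht
    have h := hgood t ht
    rw [hintT t, hμT t] at h
    have hνfin : ν (T t) ≠ ∞ := ne_top_of_le_ne_top hνtop (measure_mono (Set.subset_univ _))
    have hμfin : μ (T t) ≠ ∞ := measure_ne_top _ _
    calc ν (T t) = ENNReal.ofReal ((ν (T t)).toReal) := (ENNReal.ofReal_toReal hνfin).symm
      _ ≤ ENNReal.ofReal (CH * t * (μ (T t)).toReal) := ENNReal.ofReal_le_ofReal h
      _ = ENNReal.ofReal (CH * t) * ENNReal.ofReal ((μ (T t)).toReal) := by
          rw [ENNReal.ofReal_mul (mul_nonneg hCH0.le (le_trans hlamI ht))]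
      _ = ENNReal.ofReal (CH * t) * μ (T t) := by rw [ENNReal.ofReal_toReal hμfin]
  -- case lamI = 0: contradiction
  rcases hlamI.eq_or_lt with h0 | hlamIpos
  · exfalso
    have h1 : ν (T 0) = 0 := by
      have h := hkey 0 (le_of_eq h0.symm)
      simpa using h
    have h2 : ν (T 0)ᶜ = 0 := by
      rw [hν, withDensity_apply _ (hTmeas 0).compl]
      rw [setLIntegral_congr_fun (hTmeas 0).compl
        ((fun x hx => ?_ : ∀ x, x ∈ (T 0)ᶜ →
          ENNReal.ofReal (g x) = (fun _ => (0:ℝ≥0∞)) x))]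
      · simp
      · simp only [ENNReal.ofReal_eq_zero]
        exact not_lt.mp hx
    have h3 : ν Set.univ = 0 := by
      rw [← measure_add_measure_compl (hTmeas 0), h1, h2, add_zero]
    rw [hνuniv, ENNReal.ofReal_eq_zero] at h3
    linarith [hwpos]
  -- main case lamI > 0
  have hgr_meas : Measurable fun x => g x ^ r :=
    (Real.continuous_rpow_const hr0.le).measurable.comp hgmeas
  have hgr1_meas : Measurable fun x => g x ^ (r - 1) :=
    (Real.continuous_rpow_const (by linarith : (0:ℝ) ≤ r - 1)).measurable.comp hgmeas
  set I := ∫⁻ x, ENNReal.ofReal (g x ^ r) ∂μ with hIdef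
  set K := ∫⁻ t in Set.Ioi (0:ℝ), μ (T t) * ENNReal.ofReal (t ^ (r - 1)) with hKdef
  have hI : I = ENNReal.ofReal r * K :=
    lintegral_rpow_eq_lintegral_meas_lt_mul μ (Filter.Eventually.of_forall hg0)
      hgmeas.aemeasurable hr0
  have hJ : (∫⁻ x, ENNReal.ofReal (g x ^ (r - 1)) ∂ν) =
      ENNReal.ofReal (r - 1) *
        ∫⁻ t in Set.Ioi (0:ℝ), ν (T t) * ENNReal.ofReal (t ^ (r - 2)) := by
    have h := lintegral_rpow_eq_lintegral_meas_lt_mul ν (Filter.Eventually.of_forall hg0)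
      hgmeas.aemeasurable (by linarith : (0:ℝ) < r - 1)
    rw [show r - 1 - 1 = r - 2 by ring] at h
    exact h
  have hJI : (∫⁻ x, ENNReal.ofReal (g x ^ (r - 1)) ∂ν) = I := by
    rw [hν, lintegral_withDensity_eq_lintegral_mul μ hgmeas.ennreal_ofReal
      hgr1_meas.ennreal_ofReal]
    apply lintegral_congr
    intro x
    simp only [Pi.mul_apply]
    rcases (hg0 x).eq_or_lt with h | h
    · rw [← h, Real.zero_rpow (by linarith : r - 1 ≠ 0), Real.zero_rpow hr0.ne']
      simp
    · rw [← ENNReal.ofReal_mul (hg0 x)]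
      congr 1
      have h2 := Real.rpow_add h 1 (r - 1)
      rw [Real.rpow_one, show (1:ℝ) + (r - 1) = r by ring] at h2
      exact h2.symm
  have hIfin : I ≠ ∞ := by
    have hle : I ≤ ∫⁻ _x, ENNReal.ofReal (M ^ r) ∂μ :=
      lintegral_mono fun x =>
        ENNReal.ofReal_le_ofReal (Real.rpow_le_rpow (hg0 x) (hgM x) hr0.le)
    rw [lintegral_const] at hle
    exact ne_top_of_le_ne_top (ENNReal.mul_ne_top ENNReal.ofReal_ne_top
      (measure_ne_top μ _)) hle
  have hKfin : K ≠ ∞ := by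
    intro h
    rw [h, ENNReal.mul_top (ENNReal.ofReal_pos.mpr hr0).ne'] at hI
    exact hIfin hI
  -- split the t-integral
  have hsplit : (∫⁻ t in Set.Ioi (0:ℝ), ν (T t) * ENNReal.ofReal (t ^ (r - 2))) =
      (∫⁻ t in Set.Ioc 0 lamI, ν (T t) * ENNReal.ofReal (t ^ (r - 2))) +
      (∫⁻ t in Set.Ioi lamI, ν (T t) * ENNReal.ofReal (t ^ (r - 2))) := by
    rw [← Set.Ioc_union_Ioi_eq_Ioi hlamI,
      lintegral_union measurableSet_Ioi Set.Ioc_disjoint_Ioi_same]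
  have hIocint : (∫⁻ t in Set.Ioc (0:ℝ) lamI, ENNReal.ofReal (t ^ (r - 2))) =
      ENNReal.ofReal (lamI ^ (r - 1) / (r - 1)) := by
    rw [← ofReal_integral_eq_lintegral_ofReal
      (intervalIntegral.intervalIntegrable_rpow' (by linarith : (-1:ℝ) < r - 2)).1
      (by filter_upwards [self_mem_ae_restrict measurableSet_Ioc] with t ht
          exact Real.rpow_nonneg ht.1.le _)]
    congr 1
    rw [← intervalIntegral.integral_of_le hlamI,
      integral_rpow (Or.inl (by linarith : (-1:ℝ) < r - 2)),
      Real.zero_rpow (by intro h; rw [show r - 2 + 1 = r - 1 by ring] at h; linarith),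
      show r - 2 + 1 = r - 1 by ring, sub_zero]
  have hA1 : (∫⁻ t in Set.Ioc (0:ℝ) lamI, ν (T t) * ENNReal.ofReal (t ^ (r - 2))) ≤
      ν Set.univ * ENNReal.ofReal (lamI ^ (r - 1) / (r - 1)) := by
    calc (∫⁻ t in Set.Ioc (0:ℝ) lamI, ν (T t) * ENNReal.ofReal (t ^ (r - 2)))
        ≤ ∫⁻ t in Set.Ioc (0:ℝ) lamI, ν Set.univ * ENNReal.ofReal (t ^ (r - 2)) :=
          lintegral_mono fun t =>
            mul_le_mul_left (measure_mono (Set.subset_univ _)) _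
      _ = ν Set.univ * ∫⁻ t in Set.Ioc (0:ℝ) lamI, ENNReal.ofReal (t ^ (r - 2)) :=
          lintegral_const_mul' _ _ hνtop
      _ = ν Set.univ * ENNReal.ofReal (lamI ^ (r - 1) / (r - 1)) := by rw [hIocint]
  have hA2 : (∫⁻ t in Set.Ioi lamI, ν (T t) * ENNReal.ofReal (t ^ (r - 2))) ≤
      ENNReal.ofReal CH * K := by
    calc (∫⁻ t in Set.Ioi lamI, ν (T t) * ENNReal.ofReal (t ^ (r - 2)))
        ≤ ∫⁻ t in Set.Ioi lamI,
            ENNReal.ofReal CH * (μ (T t) * ENNReal.ofReal (t ^ (r - 1))) := by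
          apply lintegral_mono_ae
          rw [ae_restrict_iff' measurableSet_Ioi]
          filter_upwards with t ht
          have ht0 : 0 < t := lt_trans hlamIpos ht
          calc ν (T t) * ENNReal.ofReal (t ^ (r - 2))
              ≤ (ENNReal.ofReal (CH * t) * μ (T t)) * ENNReal.ofReal (t ^ (r - 2)) :=
                mul_le_mul_left (hkey t (le_of_lt ht)) _
            _ = ENNReal.ofReal CH *
                (μ (T t) * (ENNReal.ofReal t * ENNReal.ofReal (t ^ (r - 2)))) := by
                rw [ENNReal.ofReal_mul hCH0.le]; ring
            _ = ENNReal.ofReal CH * (μ (T t) * ENNReal.ofReal (t ^ (r - 1))) := by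
                rw [← ENNReal.ofReal_mul ht0.le,
                  show t * t ^ (r - 2) = t ^ (r - 1) by
                    rw [show r - 1 = 1 + (r - 2) by ring, Real.rpow_add ht0, Real.rpow_one]]
      _ = ENNReal.ofReal CH *
            ∫⁻ t in Set.Ioi lamI, μ (T t) * ENNReal.ofReal (t ^ (r - 1)) :=
          lintegral_const_mul' _ _ ENNReal.ofReal_ne_top
      _ ≤ ENNReal.ofReal CH * K := by
          apply mul_le_mul_right
          rw [hKdef]
          exact lintegral_mono' (Measure.restrict_mono (Set.Ioi_subset_Ioi hlamI) le_rfl)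
            le_rfl
  have hmain : I ≤ ENNReal.ofReal (r - 1) *
      (ν Set.univ * ENNReal.ofReal (lamI ^ (r - 1) / (r - 1)) + ENNReal.ofReal CH * K) := by
    calc I = ∫⁻ x, ENNReal.ofReal (g x ^ (r - 1)) ∂ν := hJI.symm
      _ = ENNReal.ofReal (r - 1) *
          ∫⁻ t in Set.Ioi (0:ℝ), ν (T t) * ENNReal.ofReal (t ^ (r - 2)) := hJ
      _ = ENNReal.ofReal (r - 1) *
          ((∫⁻ t in Set.Ioc 0 lamI, ν (T t) * ENNReal.ofReal (t ^ (r - 2))) +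
           (∫⁻ t in Set.Ioi lamI, ν (T t) * ENNReal.ofReal (t ^ (r - 2)))) := by rw [hsplit]
      _ ≤ _ := mul_le_mul_right (add_le_add hA1 hA2) _
  -- pass to real numbers
  set W := ∫ x in Set.Ioo a b, w x with hWdef
  have hW0 : 0 ≤ W := le_of_lt hwpos
  set i := I.toReal with hidef
  set k := K.toReal with hkdef
  have hi0 : 0 ≤ i := ENNReal.toReal_nonneg
  have hk0 : 0 ≤ k := ENNReal.toReal_nonneg
  have hIK : i = r * k := by
    rw [hidef, hI, ENNReal.toReal_mul, ENNReal.toReal_ofReal hr0.le]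
  have hL0 : 0 ≤ lamI ^ (r - 1) := Real.rpow_nonneg hlamI _
  have hle : i ≤ (r - 1) * (W * (lamI ^ (r - 1) / (r - 1)) + CH * k) := by
    have h := ENNReal.toReal_mono ?_ hmain
    · rw [hνuniv, ENNReal.toReal_mul, ENNReal.toReal_add, ENNReal.toReal_mul,
        ENNReal.toReal_mul, ENNReal.toReal_ofReal (by linarith : (0:ℝ) ≤ r - 1),
        ENNReal.toReal_ofReal hW0, ENNReal.toReal_ofReal (div_nonneg (Real.rpow_nonneg hlamI _) (by linarith)),
        ENNReal.toReal_ofReal hCH0.le] at h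
      · exact h
      · exact ENNReal.mul_ne_top ENNReal.ofReal_ne_top ENNReal.ofReal_ne_top
      · exact ENNReal.mul_ne_top ENNReal.ofReal_ne_top hKfin
    · rw [hνuniv]
      exact ENNReal.mul_ne_top ENNReal.ofReal_ne_top
        (ENNReal.add_ne_top.mpr ⟨ENNReal.mul_ne_top ENNReal.ofReal_ne_top
          ENNReal.ofReal_ne_top, ENNReal.mul_ne_top ENNReal.ofReal_ne_top hKfin⟩)
  -- identify the goal integral with i
  have hiw : (∫ x in Set.Ioo a b, w x ^ r) = i := by
    rw [show (∫ x in Set.Ioo a b, w x ^ r) = ∫ x, g x ^ r ∂μ from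
      integral_congr_ae (by filter_upwards [hg_eq] with x hx; rw [hx])]
    rw [integral_eq_lintegral_of_nonneg_ae
      (Filter.Eventually.of_forall fun x => Real.rpow_nonneg (hg0 x) r)
      hgr_meas.aestronglyMeasurable]
  rw [hiw]
  have hsimp : (r - 1) * (W * (lamI ^ (r - 1) / (r - 1))) = W * lamI ^ (r - 1) := by
    rw [mul_comm (r - 1), mul_assoc, div_mul_cancel₀ _ (by linarith : r - 1 ≠ 0)]
  have hle2 : i ≤ W * lamI ^ (r - 1) + CH * (r - 1) * k := by
    have h := hle
    rw [mul_add, hsimp] at h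
    linarith
  rw [div_mul_eq_mul_div, div_mul_eq_mul_div, le_div_iff₀ hden]
  have h3 : r * i ≤ r * (W * lamI ^ (r - 1)) + r * (CH * (r - 1) * k) := by nlinarith
  have h4 : r * (CH * (r - 1) * k) = CH * (r - 1) * i := by rw [hIK]; ring
  nlinarith
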